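/- arXiv:1703.06899 — 3 statements merged into one kernel-verified Lean document; each statement's English description precedes it below -/
import Mathlib

section
/- Let q be a prime power, r an odd positive integer, and consider the affine curve C: y^q + y = x^{q^r+1} over F_{q^{2r}}. The number of affine F_{q^{2r}}-rational points of C is q^{2r+1}. -/
open Polynomial in
lemma aux_root_count {F : Type*} [Field F] [Fintype F] [DecidableEq F]
    (h : F[X]) (hne : h ≠ 0) (hd : h ∣ X ^ (Fintype.card F) - X) :
    {y : F | Polynomial.eval y h = 0}.ncard = h.natDegree := by
  have h1 : 1 < Fintype.card F := Fintype.one_lt_card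
  have bigne : (X ^ (Fintype.card F) - X : F[X]) ≠ 0 :=
    FiniteField.X_pow_card_sub_X_ne_zero F h1
  have bigroots := FiniteField.roots_X_pow_card_sub_X F
  have bigsplits : Splits (X ^ (Fintype.card F) - X : F[X]) := by
    rw [splits_iff_card_roots, bigroots, FiniteField.X_pow_card_sub_X_natDegree_eq F h1]
    simp [Finset.card_univ]
  have hsplits : Splits h := bigsplits.of_dvd bigne hd
  have hnodup : h.roots.Nodup := by
    refine Multiset.nodup_of_le (roots.le_of_dvd bigne hd) ?_
    rw [bigroots]; exact Finset.univ.nodup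
  have hset : {y : F | Polynomial.eval y h = 0} = ↑h.roots.toFinset := by
    ext y; simp [Multiset.mem_toFinset, mem_roots hne, IsRoot.def]
  rw [hset, Set.ncard_coe_finset, Multiset.toFinset_card_of_nodup hnodup,
    ← splits_iff_card_roots.mp hsplits]

open Polynomial in
lemma aux_dvd {F : Type*} [Field F] (a m : ℕ) (ha : 0 < a) :
    (X ^ a - X : F[X]) ∣ X ^ (a ^ m) - X := by
  have e : ∀ b : ℕ, 0 < b → (X ^ b - X : F[X]) = (X ^ (b - 1) - 1) * X := by
    intro b hb
    conv_lhs => rw [show b = (b - 1) + 1 from (Nat.succ_pred_eq_of_pos hb).symm]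
    rw [pow_succ]; ring
  rw [e a ha, e (a ^ m) (Nat.pow_pos ha)]
  apply mul_dvd_mul_right
  obtain ⟨k, hk⟩ := Nat.sub_dvd_pow_sub_pow a 1 m
  rw [one_pow] at hk
  rw [hk, pow_mul]
  simpa using sub_dvd_pow_sub_pow ((X : F[X]) ^ (a - 1)) 1 k

lemma aux_sum_range_add {M : Type*} [AddCommMonoid M] (f : ℕ → M) (m n : ℕ) :
    ∑ i ∈ Finset.range (m + n), f i
      = ∑ i ∈ Finset.range m, f i + ∑ i ∈ Finset.range n, f (m + i) := by
  induction n with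
  | zero => simp
  | succ k ih =>
    rw [show m + (k + 1) = (m + k) + 1 by omega, Finset.sum_range_succ, ih,
      Finset.sum_range_succ, add_assoc]

lemma aux_card_sigma {ι : Type*} [Fintype ι] (g : ι → Type*) [∀ i, Fintype (g i)] :
    Nat.card ((i : ι) × g i) = ∑ i, Nat.card (g i) := by
  simp [Nat.card_eq_fintype_card]

lemma aux_translate {F : Type*} [AddCommGroup F] (f : F → F)
    (hf : ∀ a b, f (a + b) = f a + f b) (c y₀ : F) (hy₀ : f y₀ = c) :
    Nat.card {y : F // f y = c} = Nat.card {y : F // f y = 0} := by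
  have h0 : f 0 = 0 := by have := hf 0 0; simpa using this
  have hsub : ∀ a b, f (a - b) = f a - f b := by
    intro a b
    have h := hf (a - b) b
    rw [sub_add_cancel] at h
    exact eq_sub_of_add_eq h.symm
  apply Nat.card_congr
  refine ⟨fun z => ⟨z.1 - y₀, by rw [hsub, z.2, hy₀, sub_self]⟩,
    fun z => ⟨z.1 + y₀, by rw [hf, z.2, hy₀, zero_add]⟩, ?_, ?_⟩
  · intro z; ext; simp
  · intro z; ext; simp

lemma aux_fiber_count {F : Type*} [AddCommGroup F] [Fintype F] (f : F → F)
    (hf : ∀ a b, f (a + b) = f a + f b) :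
    Fintype.card F = {z : F | f z = 0}.ncard * (Set.range f).ncard := by
  classical
  have key : ∀ w : Set.range f,
      Nat.card {z : F // (⟨f z, Set.mem_range_self z⟩ : Set.range f) = w}
        = Nat.card {z : F // f z = 0} := by
    rintro ⟨w, z₀, hz₀⟩
    rw [Nat.card_congr (Equiv.subtypeEquivRight (q := fun z : F => f z = w)
      (fun z => by simp [Subtype.ext_iff]))]
    exact aux_translate f hf w z₀ hz₀
  calc Fintype.card F
      = Nat.card ((w : Set.range f) ×
          {z : F // (⟨f z, Set.mem_range_self z⟩ : Set.range f) = w}) := by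
        rw [Nat.card_congr (Equiv.sigmaFiberEquiv
          (fun z : F => (⟨f z, Set.mem_range_self z⟩ : Set.range f)))]
        exact (Nat.card_eq_fintype_card).symm
    _ = ∑ w : Set.range f, Nat.card
          {z : F // (⟨f z, Set.mem_range_self z⟩ : Set.range f) = w} := aux_card_sigma _
    _ = ∑ _w : Set.range f, Nat.card {z : F // f z = 0} :=
        Finset.sum_congr rfl fun w _ => key w
    _ = Fintype.card (Set.range f) * Nat.card {z : F // f z = 0} := by
        rw [Finset.sum_const, smul_eq_mul, Finset.card_univ]
    _ = {z : F | f z = 0}.ncard * (Set.range f).ncard := by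
        rw [mul_comm, ← Nat.card_coe_set_eq {z : F | f z = 0},
          ← Nat.card_coe_set_eq (Set.range f)]
        rw [← Nat.card_eq_fintype_card]; rfl

open Polynomial

theorem stmt7 (q r : ℕ) (hq : ∃ (p n : ℕ), p.Prime ∧ 0 < n ∧ q = p ^ n)
    (hr : Odd r) (hr' : 0 < r)
    (F : Type*) [Field F] [Fintype F] (hF : Fintype.card F = q ^ (2 * r)) :
    {P : F × F | P.2 ^ q + P.2 = P.1 ^ (q ^ r + 1)}.ncard = q ^ (2 * r + 1) := by
  classical
  obtain ⟨p, n, hp, hn, rfl⟩ := hq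
  haveI hpfact : Fact p.Prime := ⟨hp⟩
  set Q := p ^ n with hQdef
  have hQ1 : 1 < Q := Nat.one_lt_pow hn.ne' hp.one_lt
  have hQ0 : 0 < Q := by omega
  -- characteristic
  haveI hcharP : CharP F p := by
    haveI := ringChar.charP F
    have hcp : (ringChar F).Prime := CharP.char_is_prime F (ringChar F)
    obtain ⟨k, hk1, hk2⟩ := FiniteField.card F (ringChar F)
    have hdvd : ringChar F ∣ p ^ (n * (2 * r)) := by
      rw [pow_mul, ← hQdef, ← hF, hk2]
      exact dvd_pow_self _ k.pos.ne'
    have hpe : ringChar F = p :=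
      (Nat.prime_dvd_prime_iff_eq hcp hp).mp (hcp.dvd_of_dvd_pow hdvd)
    rwa [hpe] at this
  have hF' : Fintype.card F = Q ^ (2 * r) := hF
  have hxN : ∀ x : F, x ^ (Q ^ (2 * r)) = x := fun x => by
    rw [← hF']; exact FiniteField.pow_card x
  have hfrob : ∀ a b : F, (a + b) ^ Q = a ^ Q + b ^ Q := fun a b => by
    rw [hQdef]; exact add_pow_char_pow a b p n
  have hfrobk : ∀ (k : ℕ) (a b : F), (a + b) ^ Q ^ k = a ^ Q ^ k + b ^ Q ^ k := by
    intro k a b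
    rw [hQdef, ← pow_mul p n k]
    exact add_pow_char_pow a b p (n * k)
  have hsumpow : ∀ (s : Finset ℕ) (g : ℕ → F),
      (∑ i ∈ s, g i) ^ Q = ∑ i ∈ s, (g i) ^ Q := by
    intro s g
    classical
    induction s using Finset.induction with
    | empty => simp [zero_pow hQ0.ne']
    | insert _ _ hx ih => rw [Finset.sum_insert hx, Finset.sum_insert hx, hfrob, ih]
  have hphi_add : ∀ a b : F, ((a + b) ^ Q + (a + b)) = (a ^ Q + a) + (b ^ Q + b) := by
    intro a b; rw [hfrob]; ring
  -- kernel cardinality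
  have hker : {y : F | y ^ Q + y = 0}.ncard = Q := by
    have d1 : (X ^ Q + X : F[X]) ∣ X ^ (Q ^ 2) - X := by
      have hpoly : ((X ^ Q + X : F[X])) ^ Q - (X ^ Q + X) = X ^ (Q ^ 2) - X := by
        have h1 : ((X ^ Q + X : F[X])) ^ Q = (X ^ Q) ^ Q + X ^ Q := by
          rw [hQdef]; exact add_pow_char_pow _ _ p n
        rw [h1, ← pow_mul, ← pow_two]
        ring
      have h2 : (X ^ Q + X : F[X]) ∣ ((X ^ Q + X : F[X])) ^ Q - (X ^ Q + X) :=
        dvd_sub (dvd_pow_self _ hQ0.ne') dvd_rfl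
      rwa [hpoly] at h2
    have d2 : (X ^ (Q ^ 2) - X : F[X]) ∣ X ^ (Fintype.card F) - X := by
      rw [hF']
      have h := aux_dvd (F := F) (Q ^ 2) r (by positivity)
      rwa [← pow_mul Q 2 r] at h
    have hdeg : (X ^ Q + X : F[X]).natDegree = Q := by
      have hlt : (X : F[X]).degree < ((X : F[X]) ^ Q).degree := by
        rw [degree_X, degree_X_pow]; exact_mod_cast hQ1
      rw [natDegree_eq_of_degree_eq (degree_add_eq_left_of_degree_lt hlt), natDegree_X_pow]
    have hne : (X ^ Q + X : F[X]) ≠ 0 :=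
      ne_zero_of_natDegree_gt (n := 0) (by rw [hdeg]; omega)
    have hrc := aux_root_count (X ^ Q + X) hne (d1.trans d2)
    rw [hdeg] at hrc
    have hsets : {y : F | y ^ Q + y = 0} = {y : F | Polynomial.eval y (X ^ Q + X) = 0} := by
      ext y; simp
    rw [hsets]
    exact hrc
  -- F_q cardinality
  have hfq : {y : F | y ^ Q = y}.ncard = Q := by
    have hdvd : (X ^ Q - X : F[X]) ∣ X ^ (Fintype.card F) - X := by
      rw [hF']; exact aux_dvd Q (2 * r) hQ0
    have hrc := aux_root_count (X ^ Q - X) (FiniteField.X_pow_card_sub_X_ne_zero F hQ1) hdvd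
    rw [FiniteField.X_pow_card_sub_X_natDegree_eq F hQ1] at hrc
    have hsets : {y : F | y ^ Q = y} = {y : F | Polynomial.eval y (X ^ Q - X) = 0} := by
      ext y; simp [sub_eq_zero]
    rw [hsets]
    exact hrc
  -- solutions exist
  have hsol : ∀ c : F, c ^ (Q ^ r) = c → ∃ y : F, y ^ Q + y = c := by
    intro c hc
    by_cases h2 : (2 : F) = 0
    · -- characteristic 2 : trace argument
      have h2' : ∀ z : F, z + z = 0 := fun z => by
        have : z + z = 2 * z := by ring
        rw [this, h2, zero_mul]
      set T : F → F := fun z => ∑ i ∈ Finset.range (2 * r), z ^ Q ^ i with hT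
      have hTadd : ∀ a b, T (a + b) = T a + T b := by
        intro a b
        simp only [hT]
        rw [← Finset.sum_add_distrib]
        exact Finset.sum_congr rfl fun i _ => hfrobk i a b
      have hshift : ∀ z : F, ∑ i ∈ Finset.range (2 * r), z ^ Q ^ (i + 1) = T z := by
        intro z
        have e1 : ∑ i ∈ Finset.range (2 * r + 1), z ^ Q ^ i
            = (∑ i ∈ Finset.range (2 * r), z ^ Q ^ (i + 1)) + z ^ Q ^ 0 :=
          Finset.sum_range_succ' _ _
        have e2 : ∑ i ∈ Finset.range (2 * r + 1), z ^ Q ^ i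
            = T z + z ^ Q ^ (2 * r) := Finset.sum_range_succ _ _
        have hz : z ^ Q ^ (2 * r) = z ^ Q ^ 0 := by
          rw [hxN z, pow_zero, pow_one]
        rw [e2, hz] at e1
        exact (add_right_cancel e1.symm)
      have hTQpow : ∀ z : F, T (z ^ Q) = T z := by
        intro z
        have : ∀ i : ℕ, (z ^ Q) ^ Q ^ i = z ^ Q ^ (i + 1) := by
          intro i; rw [← pow_mul, ← pow_succ']
        calc T (z ^ Q) = ∑ i ∈ Finset.range (2 * r), z ^ Q ^ (i + 1) :=
              Finset.sum_congr rfl fun i _ => this i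
          _ = T z := hshift z
      have hTfix : ∀ z : F, (T z) ^ Q = T z := by
        intro z
        have e1 : (T z) ^ Q = ∑ i ∈ Finset.range (2 * r), (z ^ Q ^ i) ^ Q := by
          simp only [hT]
          exact hsumpow _ _
        rw [e1]
        calc ∑ i ∈ Finset.range (2 * r), (z ^ Q ^ i) ^ Q
            = ∑ i ∈ Finset.range (2 * r), z ^ Q ^ (i + 1) :=
              Finset.sum_congr rfl fun i _ => by rw [← pow_mul, ← pow_succ]
          _ = T z := hshift z
      have hTc0 : T c = 0 := by
        simp only [hT]
        rw [two_mul, aux_sum_range_add]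
        have : ∀ i : ℕ, c ^ Q ^ (r + i) = c ^ Q ^ i := by
          intro i; rw [pow_add, pow_mul, hc]
        rw [Finset.sum_congr rfl fun i _ => this i]
        exact h2' _
      -- T is not identically zero
      have hTnz : ∃ z₀ : F, T z₀ ≠ 0 := by
        by_contra hcon
        push_neg at hcon
        set P : F[X] := ∑ i ∈ Finset.range (2 * r), X ^ Q ^ i with hP
        have hPeval : ∀ z : F, P.eval z = T z := by
          intro z; simp [hP, hT, eval_finset_sum]
        have hPdeg : P.natDegree ≤ Q ^ (2 * r - 1) := by
          apply natDegree_sum_le_of_forall_le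
          intro i hi
          rw [natDegree_X_pow]
          exact Nat.pow_le_pow_right hQ0 (by simp at hi; omega)
        have hP0 : P = 0 := by
          apply eq_zero_of_natDegree_lt_card_of_eval_eq_zero P Function.injective_id
            (fun z => by rw [hPeval]; exact hcon z)
          calc P.natDegree ≤ Q ^ (2 * r - 1) := hPdeg
            _ < Q ^ (2 * r) := Nat.pow_lt_pow_right hQ1 (by omega)
            _ = Fintype.card F := hF'.symm
        have hcoeff : P.coeff 1 = 1 := by
          rw [hP, finset_sum_coeff]
          rw [Finset.sum_eq_single 0]
          · simp
          · intro i _ hine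
            rw [coeff_X_pow, if_neg]
            have : 1 < Q ^ i := Nat.one_lt_pow hine hQ1
            omega
          · intro habs
            exact absurd (Finset.mem_range.mpr (by omega)) habs
        rw [hP0] at hcoeff
        simp at hcoeff
      obtain ⟨z₀, hz₀⟩ := hTnz
      -- range of T has ncard Q
      have hTfib := aux_fiber_count T hTadd
      have hrange_sub : Set.range T ⊆ {y : F | y ^ Q = y} := by
        rintro _ ⟨z, rfl⟩; exact hTfix z
      have hlamfix : ∀ lam : F, lam ^ Q = lam → ∀ i : ℕ, lam ^ Q ^ i = lam := by
        intro lam hlam i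
        induction i with
        | zero => simp
        | succ k ih => rw [pow_succ, pow_mul, ih, hlam]
      have hmul : ∀ lam : F, lam ^ Q = lam → ∀ z, T (lam * z) = lam * T z := by
        intro lam hlam z
        simp only [hT, Finset.mul_sum]
        refine Finset.sum_congr rfl fun i _ => ?_
        rw [mul_pow, hlamfix lam hlam i]
      have hge : Q ≤ (Set.range T).ncard := by
        have hinj : Set.InjOn (fun lam => lam * T z₀) {y : F | y ^ Q = y} :=
          fun a _ b _ h => mul_right_cancel₀ hz₀ h
        have himg : (fun lam => lam * T z₀) '' {y : F | y ^ Q = y} ⊆ Set.range T := by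
          rintro _ ⟨lam, hlam, rfl⟩
          exact ⟨lam * z₀, hmul lam hlam z₀⟩
        calc Q = {y : F | y ^ Q = y}.ncard := hfq.symm
          _ = ((fun lam => lam * T z₀) '' {y : F | y ^ Q = y}).ncard :=
            (Set.ncard_image_of_injOn hinj).symm
          _ ≤ (Set.range T).ncard := Set.ncard_le_ncard himg (Set.toFinite _)
      have hle : (Set.range T).ncard ≤ Q := by
        rw [← hfq]; exact Set.ncard_le_ncard hrange_sub (Set.toFinite _)
      have hrange_card : (Set.range T).ncard = Q := le_antisymm hle hge
      -- kernel of T has ncard Q^(2r-1)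
      have hkerT : {z : F | T z = 0}.ncard = Q ^ (2 * r - 1) := by
        rw [hF', hrange_card] at hTfib
        have hpow : Q ^ (2 * r) = Q ^ (2 * r - 1) * Q := by
          rw [← pow_succ]; congr 1; omega
        rw [hpow] at hTfib
        exact (Nat.eq_of_mul_eq_mul_right hQ0 hTfib.symm)
      -- range of phi has ncard Q^(2r-1)
      have hphic := aux_fiber_count (fun y : F => y ^ Q + y) hphi_add
      rw [hF'] at hphic
      have hkerphi : {z : F | (fun y : F => y ^ Q + y) z = 0}.ncard = Q := hker
      rw [hkerphi] at hphic
      have hrphi : (Set.range (fun y : F => y ^ Q + y)).ncard = Q ^ (2 * r - 1) := by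
        have hpow : Q ^ (2 * r) = Q * Q ^ (2 * r - 1) := by
          rw [← pow_succ']; congr 1; omega
        rw [hpow] at hphic
        exact (Nat.eq_of_mul_eq_mul_left hQ0 hphic.symm)
      have hsub2 : Set.range (fun y : F => y ^ Q + y) ⊆ {z : F | T z = 0} := by
        rintro _ ⟨y, rfl⟩
        show T (y ^ Q + y) = 0
        rw [hTadd, hTQpow]
        exact h2' (T y)
      have heq : Set.range (fun y : F => y ^ Q + y) = {z : F | T z = 0} :=
        Set.eq_of_subset_of_ncard_le hsub2 (by rw [hkerT, hrphi]) (Set.toFinite _)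
      have hmem : c ∈ Set.range (fun y : F => y ^ Q + y) := by
        rw [heq]; exact hTc0
      exact hmem
    · -- odd characteristic : explicit solution
      have h2Q : (2 : F) ^ Q = 2 := by
        have h21 : (2 : F) = 1 + 1 := by norm_num
        rw [h21, hfrob 1 1, one_pow]
      have hQodd : Odd Q := by
        have hp2 : p ≠ 2 := by
          rintro rfl
          exact h2 (by exact_mod_cast CharP.cast_eq_zero F 2)
        exact (hp.odd_of_ne_two hp2).pow
      set f : ℕ → F := fun i => (-1) ^ i * c ^ Q ^ i with hf
      set S : F := ∑ i ∈ Finset.range r, f i with hS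
      have hfpow : ∀ i : ℕ, (f i) ^ Q = -f (i + 1) := by
        intro i
        simp only [hf]
        have e1 : ((-1 : F) ^ i) ^ Q = (-1 : F) ^ i := by
          rw [← pow_mul, mul_comm, pow_mul, hQodd.neg_one_pow]
        have e2 : (c ^ Q ^ i) ^ Q = c ^ Q ^ (i + 1) := by
          rw [← pow_mul, ← pow_succ]
        rw [mul_pow, e1, e2, pow_succ (-1 : F) i]
        ring
      have hSQ : S ^ Q = -S + 2 * c := by
        have e1 : S ^ Q = ∑ i ∈ Finset.range r, (f i) ^ Q := by
          rw [hS]; exact hsumpow _ _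
        have e2 : ∑ i ∈ Finset.range r, (f i) ^ Q
            = -∑ i ∈ Finset.range r, f (i + 1) := by
          rw [← Finset.sum_neg_distrib]
          exact Finset.sum_congr rfl fun i _ => hfpow i
        have e3 : ∑ i ∈ Finset.range r, f (i + 1) = S + f r - f 0 := by
          have h4 := Finset.sum_range_succ' f r
          rw [Finset.sum_range_succ] at h4
          exact eq_sub_of_add_eq h4.symm
        have hfr : f r = -c := by
          simp only [hf]; rw [hr.neg_one_pow, hc]; ring
        have hf0 : f 0 = c := by simp [hf]
        rw [e1, e2, e3, hfr, hf0]
        ring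
      refine ⟨S / 2, ?_⟩
      rw [div_pow, h2Q, hSQ, ← add_div,
        show -S + 2 * c + S = 2 * c by ring]
      exact mul_div_cancel_left₀ c h2
  -- the curve values are fixed by the q^r power map
  have hcfix : ∀ x : F, (x ^ (Q ^ r + 1)) ^ Q ^ r = x ^ (Q ^ r + 1) := by
    intro x
    rw [← pow_mul]
    have e : (Q ^ r + 1) * Q ^ r = Q ^ (2 * r) + Q ^ r := by
      rw [add_mul, one_mul, ← pow_add, two_mul]
    rw [e, pow_add, hxN x, pow_add, pow_one]
    ring
  -- final count
  have hncard : {P : F × F | P.2 ^ Q + P.2 = P.1 ^ (Q ^ r + 1)}.ncard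
      = Nat.card {P : F × F // P.2 ^ Q + P.2 = P.1 ^ (Q ^ r + 1)} :=
    (Nat.card_coe_set_eq _).symm
  rw [hncard, Nat.card_congr (Equiv.subtypeProdEquivSigmaSubtype
    (fun (a b : F) => b ^ Q + b = a ^ (Q ^ r + 1))),
    aux_card_sigma (fun x : F => {y : F // y ^ Q + y = x ^ (Q ^ r + 1)})]
  have hfiber : ∀ x : F, Nat.card {y : F // y ^ Q + y = x ^ (Q ^ r + 1)} = Q := by
    intro x
    obtain ⟨y₀, hy₀⟩ := hsol _ (hcfix x)
    calc Nat.card {y : F // y ^ Q + y = x ^ (Q ^ r + 1)}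
        = Nat.card {y : F // y ^ Q + y = 0} :=
          aux_translate (fun y : F => y ^ Q + y) hphi_add _ y₀ hy₀
      _ = {y : F | y ^ Q + y = 0}.ncard := Nat.card_coe_set_eq _
      _ = Q := hker
  rw [Finset.sum_congr rfl fun x _ => hfiber x, Finset.sum_const, smul_eq_mul,
    Finset.card_univ, hF', ← pow_succ]
end

section
/- Let q be a prime power and m > 2 a divisor of q+1. The affine curve y^q + y = x^m over F_{q²} has exactly q(1 + m(q-1)) affine F_{q²}-rational points. -/
open Finset Polynomial

theorem stmt8 (q m : ℕ) (hq : ∃ (p n : ℕ), p.Prime ∧ 0 < n ∧ q = p ^ n)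
    (hm : 2 < m) (hmdvd : m ∣ q + 1)
    (F : Type*) [Field F] [Fintype F] (hF : Fintype.card F = q ^ 2) :
    {P : F × F | P.2 ^ q + P.2 = P.1 ^ m}.ncard = q * (1 + m * (q - 1)) := by
  classical
  obtain ⟨p, n, hp, hn, hqe⟩ := hq
  haveI : Fact p.Prime := ⟨hp⟩
  have hq1 : 1 < q := hqe ▸ Nat.one_lt_pow hn.ne' hp.one_lt
  have hq0 : 0 < q := by omega
  -- characteristic of F is p
  haveI hcharF : CharP F p := by
    haveI h1 : CharP F (ringChar F) := ringChar.charP F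
    have hr : (ringChar F).Prime := CharP.char_is_prime F (ringChar F)
    obtain ⟨k, -, hk⟩ := FiniteField.card F (ringChar F)
    have hdvd : ringChar F ∣ p := by
      have h2 : ringChar F ∣ q ^ 2 := by
        rw [← hF, hk]; exact dvd_pow_self _ (by positivity)
      rw [hqe, ← pow_mul] at h2
      exact hr.dvd_of_dvd_pow h2
    rwa [(Nat.prime_dvd_prime_iff_eq hr hp).mp hdvd] at h1
  have hadd : ∀ a b : F, (a + b) ^ q = a ^ q + b ^ q := by
    intro a b; rw [hqe]; exact add_pow_char_pow ..
  have hsub : ∀ a b : F, (a - b) ^ q = a ^ q - b ^ q := by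
    intro a b
    have h := hadd (a - b) b
    rw [sub_add_cancel] at h
    linear_combination -h
  have hQ2 : ∀ a : F, a ^ q ^ 2 = a := by
    intro a; rw [← hF]; exact FiniteField.pow_card a
  have hrange_fix : ∀ y : F, (y ^ q + y) ^ q = y ^ q + y := by
    intro y
    rw [hadd, ← pow_mul, ← sq, hQ2, add_comm]
  -- root-counting helper
  have card_roots_le : ∀ f : F[X], f ≠ 0 →
      (univ.filter fun x => f.eval x = 0).card ≤ f.natDegree := by
    intro f hf
    calc (univ.filter fun x => f.eval x = 0).card
        ≤ f.roots.toFinset.card := Finset.card_le_card (by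
          intro x hx
          simp only [Finset.mem_filter] at hx
          rw [Multiset.mem_toFinset, Polynomial.mem_roots hf]
          exact hx.2)
      _ ≤ Multiset.card f.roots := f.roots.toFinset_card_le
      _ ≤ f.natDegree := f.card_roots'
  -- kernel and fixed sets
  have hker_le : (univ.filter fun y : F => y ^ q + y = 0).card ≤ q := by
    have hdeg : (X ^ q + X : F[X]).natDegree = q := by
      rw [natDegree_add_eq_left_of_natDegree_lt]
      · exact natDegree_X_pow q
      · rw [natDegree_X, natDegree_X_pow]; omega
    have hne : (X ^ q + X : F[X]) ≠ 0 := fun h => by simp [h] at hdeg; omega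
    have := card_roots_le _ hne
    rw [hdeg] at this
    convert this using 2
    ext y
    simp
  have hfix_le : (univ.filter fun c : F => c ^ q = c).card ≤ q := by
    have hdeg : (X ^ q - X : F[X]).natDegree = q := by
      rw [natDegree_sub_eq_left_of_natDegree_lt]
      · exact natDegree_X_pow q
      · rw [natDegree_X, natDegree_X_pow]; omega
    have hne : (X ^ q - X : F[X]) ≠ 0 := fun h => by simp [h] at hdeg; omega
    have := card_roots_le _ hne
    rw [hdeg] at this
    convert this using 2
    ext y
    simp [sub_eq_zero]
  -- the additive hom
  let φ : F →+ F :=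
    { toFun := fun y => y ^ q + y
      map_zero' := by simp [zero_pow hq0.ne']
      map_add' := fun a b => by
        show (a + b) ^ q + (a + b) = (a ^ q + a) + (b ^ q + b)
        rw [hadd]; ring }
  have hker_card : Nat.card φ.ker = (univ.filter fun y : F => y ^ q + y = 0).card := by
    have e : φ.ker ≃ {y : F // y ^ q + y = 0} :=
      Equiv.subtypeEquivRight (fun y => by simp [φ, AddMonoidHom.mem_ker])
    rw [Nat.card_congr e, Nat.card_eq_fintype_card, Fintype.card_subtype]
  have hrange_card : Nat.card φ.range = (univ.filter fun c : F => ∃ y : F, y ^ q + y = c).card := by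
    have e : φ.range ≃ {c : F // ∃ y : F, y ^ q + y = c} :=
      Equiv.subtypeEquivRight (fun c => by simp [φ, AddMonoidHom.mem_range])
    rw [Nat.card_congr e, Nat.card_eq_fintype_card, Fintype.card_subtype]
  have hprod : Nat.card (F ⧸ φ.ker) * Nat.card φ.ker = q ^ 2 := by
    rw [← AddSubgroup.card_eq_card_quotient_mul_card_addSubgroup, Nat.card_eq_fintype_card, hF]
  have hquot : Nat.card (F ⧸ φ.ker) = Nat.card φ.range :=
    Nat.card_congr (QuotientAddGroup.quotientKerEquivRange φ).toEquiv
  have hrange_sub : (univ.filter fun c : F => ∃ y : F, y ^ q + y = c) ⊆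
      (univ.filter fun c : F => c ^ q = c) := by
    intro c hc
    simp only [Finset.mem_filter, Finset.mem_univ, true_and] at hc ⊢
    obtain ⟨y, rfl⟩ := hc
    exact hrange_fix y
  have hrange_le : Nat.card φ.range ≤ q := by
    rw [hrange_card]
    exact le_trans (Finset.card_le_card hrange_sub) hfix_le
  have hkle : Nat.card φ.ker ≤ q := hker_card ▸ hker_le
  have hkpos : 0 < Nat.card φ.ker := Nat.card_pos
  have hrpos : 0 < Nat.card φ.range := Nat.card_pos
  have key : ∀ a b : ℕ, a ≤ q → b ≤ q → a * b = q * q → a = q := by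
    intro a b h1 h2 h3
    rcases Nat.eq_zero_or_pos b with hb | hb
    · rw [hb, Nat.mul_zero] at h3
      exact absurd h3.symm (Nat.mul_pos hq0 hq0).ne'
    · by_contra h
      have h4 : a * b < q * b := Nat.mul_lt_mul_of_pos_right (lt_of_le_of_ne h1 h) hb
      have h5 : q * b ≤ q * q := Nat.mul_le_mul_left q h2
      omega
  have hmul : Nat.card φ.ker * Nat.card φ.range = q * q := by
    rw [← hquot, Nat.mul_comm, hprod, sq]
  have hker_eq : Nat.card φ.ker = q := key _ _ hkle hrange_le hmul
  have hrange_eq : Nat.card φ.range = q := key _ _ hrange_le hkle (by rw [Nat.mul_comm]; exact hmul)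
  -- surjectivity onto the fixed field
  have hrange_finset_eq : (univ.filter fun c : F => ∃ y : F, y ^ q + y = c) =
      (univ.filter fun c : F => c ^ q = c) := by
    apply Finset.eq_of_subset_of_card_le hrange_sub
    rw [← hrange_card, hrange_eq]
    exact hfix_le
  have hsurj : ∀ c : F, c ^ q = c → ∃ y : F, y ^ q + y = c := by
    intro c hc
    have : c ∈ (univ.filter fun c : F => ∃ y : F, y ^ q + y = c) := by
      rw [hrange_finset_eq]; simp [hc]
    simpa using this
  -- fiber counting
  have hker_q : (univ.filter fun y : F => y ^ q + y = 0).card = q := by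
    rw [← hker_card, hker_eq]
  have hfiber : ∀ c : F, c ^ q = c →
      (univ.filter fun y : F => y ^ q + y = c).card = q := by
    intro c hc
    obtain ⟨y₀, hy₀⟩ := hsurj c hc
    have hbij : (univ.filter fun y : F => y ^ q + y = c).card
        = (univ.filter fun y : F => y ^ q + y = 0).card := by
      apply Finset.card_nbij' (fun y => y - y₀) (fun y => y + y₀)
      · intro y hy
        simp only [Finset.mem_coe, Finset.mem_filter, Finset.mem_univ, true_and] at hy ⊢
        rw [hsub]
        linear_combination hy - hy₀
      · intro y hy
        simp only [Finset.mem_coe, Finset.mem_filter, Finset.mem_univ, true_and] at hy ⊢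
        rw [hadd]
        linear_combination hy + hy₀
      · intro y _; simp
      · intro y _; simp
    rw [hbij, hker_q]
  -- count x with x^m in the fixed field
  set d := m * (q - 1) with hd
  have hdpos : 0 < d := by
    have : 1 ≤ q - 1 := by omega
    have : 0 < m := by omega
    positivity
  have hfactor : q ^ 2 - 1 = (q + 1) * (q - 1) := by
    obtain ⟨k, rfl⟩ : ∃ k, q = k + 1 := ⟨q - 1, by omega⟩
    have : (k + 1 + 1) * (k + 1 - 1) + 1 = (k + 1) ^ 2 := by
      simp; ring
    omega
  have hddvd : d ∣ q ^ 2 - 1 := by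
    obtain ⟨c, hc⟩ := hmdvd
    exact ⟨c, by rw [hfactor, hc, hd]; ring⟩
  -- number of d-th roots of unity is d
  have hroots : (univ.filter fun x : F => x ^ d = 1).card = d := by
    obtain ⟨g, hg⟩ := IsCyclic.exists_ofOrder_eq_natCard (α := Fˣ)
    have hcardU : Nat.card Fˣ = q ^ 2 - 1 := by
      rw [Nat.card_eq_fintype_card, Fintype.card_units, hF]
    have hgo : orderOf g = q ^ 2 - 1 := by rw [hg, hcardU]
    have hprim : IsPrimitiveRoot (g : F) (q ^ 2 - 1) := by
      rw [IsPrimitiveRoot.coe_units_iff, ← hgo]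
      exact IsPrimitiveRoot.orderOf g
    obtain ⟨c, hc⟩ := hddvd
    have hprim' : IsPrimitiveRoot ((g : F) ^ c) d := by
      exact hprim.pow (Nat.sub_pos_of_lt (Nat.one_lt_pow two_ne_zero hq1)) (by rw [hc]; ring)
    have : (univ.filter fun x : F => x ^ d = 1) = nthRootsFinset d (1 : F) := by
      ext x
      simp [Polynomial.mem_nthRootsFinset hdpos]
    rw [this, hprim'.card_nthRootsFinset]
  have hCset : (univ.filter fun x : F => (x ^ m) ^ q = x ^ m).card = 1 + d := by
    have hset : (univ.filter fun x : F => (x ^ m) ^ q = x ^ m) =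
        insert (0 : F) (univ.filter fun x : F => x ^ d = 1) := by
      ext x
      simp only [Finset.mem_filter, Finset.mem_univ, true_and, Finset.mem_insert]
      constructor
      · intro hx
        by_cases hx0 : x = 0
        · exact Or.inl hx0
        · refine Or.inr ?_
          have hxm : x ^ m ≠ 0 := pow_ne_zero _ hx0
          have : x ^ (m * (q - 1)) * x ^ m = 1 * x ^ m := by
            rw [one_mul, ← pow_add]
            have : m * (q - 1) + m = m * q := by
              cases q with
              | zero => omega
              | succ k => simp [Nat.mul_succ, Nat.succ_sub_one]
            rw [this, pow_mul x m q]
            exact hx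
          exact mul_right_cancel₀ hxm this
      · rintro (rfl | hx)
        · rw [zero_pow (by omega : m ≠ 0), zero_pow hq0.ne']
        · have : (x ^ m) ^ q = x ^ (m * (q - 1)) * x ^ m := by
            rw [← pow_add, ← pow_mul]
            congr 1
            cases q with
            | zero => omega
            | succ k => simp [Nat.mul_succ, Nat.succ_sub_one]
          rw [this, hx, one_mul]
    rw [hset, Finset.card_insert_of_notMem (by simp [zero_pow hdpos.ne']), hroots]
    omega
  -- main computation
  rw [← Nat.card_coe_set_eq, Nat.card_eq_fintype_card]
  have e1 : Fintype.card ({P : F × F | P.2 ^ q + P.2 = P.1 ^ m} : Set (F × F)) =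
      ∑ x : F, Fintype.card {y : F // y ^ q + y = x ^ m} := by
    rw [← Fintype.card_sigma]
    exact Fintype.card_congr (Equiv.subtypeProdEquivSigmaSubtype
      (fun (x y : F) => y ^ q + y = x ^ m))
  rw [e1]
  have e2 : ∀ x : F, Fintype.card {y : F // y ^ q + y = x ^ m} =
      if (x ^ m) ^ q = x ^ m then q else 0 := by
    intro x
    split_ifs with h
    · rw [Fintype.card_subtype]
      exact hfiber _ h
    · rw [Fintype.card_eq_zero_iff]
      refine ⟨fun y => h ?_⟩
      rw [← y.2]
      exact hrange_fix y.1
  simp_rw [e2]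
  rw [← Finset.sum_filter, Finset.sum_const, smul_eq_mul, hCset]
  ring
end

section
/- Let q be a prime power, r an odd integer, and consider the solutions of y^q + y = x^{q^r+1} over F_{q^{2r}} under the group action generated by σ(x,y) = (αx, α^{q^r+1}y), where α ∈ F_{q^{2r}}^* has order (q^r+1)(q-1). Then: the point (0,0) is a fixed point; the q-1 points of the form (0,b) with b ≠ 0 and b^q + b = 0 form a single orbit of length q-1; and every point (x,y) with x ≠ 0 lies in an orbit of length (q^r+1)(q-1). -/
lemma orbitCard {β : Type*} (f : ℕ → β) (m : ℕ) (hm : 0 < m)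
    (hmod : ∀ j, f j = f (j % m)) (hinj : Set.InjOn f (Set.Iio m)) :
    {P : β | ∃ j : ℕ, P = f j}.ncard = m := by
  have hset : {P : β | ∃ j : ℕ, P = f j} = f '' Set.Iio m := by
    ext P
    constructor
    · rintro ⟨j, rfl⟩
      exact ⟨j % m, Nat.mod_lt j hm, (hmod j).symm⟩
    · rintro ⟨j, _, rfl⟩
      exact ⟨j, rfl⟩
  rw [hset, Set.ncard_image_of_injOn hinj, ← Finset.coe_range,
    Set.ncard_coe_finset, Finset.card_range]

theorem stmt9 (q r : ℕ) (hq : ∃ (p n : ℕ), p.Prime ∧ 0 < n ∧ q = p ^ n)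
    (hr : Odd r) (hr' : 0 < r)
    (F : Type*) [Field F] [Fintype F] (hF : Fintype.card F = q ^ (2 * r))
    (α : Fˣ) (hα : orderOf α = (q ^ r + 1) * (q - 1)) :
    (∀ j : ℕ, (((α : F) ^ j * 0, ((α : F) ^ (q ^ r + 1)) ^ j * 0) : F × F) = (0, 0)) ∧
    (∀ b : F, b ≠ 0 → b ^ q + b = 0 →
      {P : F × F | ∃ j : ℕ, P = (0, ((α : F) ^ (q ^ r + 1)) ^ j * b)}.ncard = q - 1) ∧
    (∀ x y : F, x ≠ 0 → y ^ q + y = x ^ (q ^ r + 1) →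
      {P : F × F | ∃ j : ℕ,
          P = ((α : F) ^ j * x, ((α : F) ^ (q ^ r + 1)) ^ j * y)}.ncard
        = (q ^ r + 1) * (q - 1)) := by
  have hq2 : 1 < q := by
    obtain ⟨p, n, hp, hn, rfl⟩ := hq
    exact Nat.one_lt_pow hn.ne' hp.one_lt
  have hq1 : 0 < q - 1 := by omega
  have hqr : 0 < q ^ r + 1 := by positivity
  have hN : 0 < (q ^ r + 1) * (q - 1) := Nat.mul_pos hqr hq1
  have hβ : orderOf (α ^ (q ^ r + 1)) = q - 1 := by
    rw [orderOf_pow, hα,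
      Nat.gcd_eq_right (dvd_mul_right _ _), Nat.mul_div_cancel_left _ hqr]
  -- transfer power equalities modulo the order, in units
  have hmodα : ∀ j, (α : F) ^ (j % ((q ^ r + 1) * (q - 1))) = (α : F) ^ j := by
    intro j
    have := congrArg (Units.val) (pow_mod_orderOf α j)
    rw [hα] at this
    simpa using this
  have hmodβ : ∀ j, ((α : F) ^ (q ^ r + 1)) ^ (j % (q - 1))
      = ((α : F) ^ (q ^ r + 1)) ^ j := by
    intro j
    have := congrArg (Units.val) (pow_mod_orderOf (α ^ (q ^ r + 1)) j)
    rw [hβ] at this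
    simpa using this
  have hinjα : ∀ i ∈ Set.Iio ((q ^ r + 1) * (q - 1)),
      ∀ j ∈ Set.Iio ((q ^ r + 1) * (q - 1)), (α : F) ^ i = (α : F) ^ j → i = j := by
    intro i hi j hj h
    have hu : α ^ i = α ^ j := Units.ext (by simpa using h)
    have := pow_injOn_Iio_orderOf (x := α)
    rw [hα] at this
    exact this hi hj hu
  have hinjβ : ∀ i ∈ Set.Iio (q - 1), ∀ j ∈ Set.Iio (q - 1),
      ((α : F) ^ (q ^ r + 1)) ^ i = ((α : F) ^ (q ^ r + 1)) ^ j → i = j := by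
    intro i hi j hj h
    have hu : (α ^ (q ^ r + 1)) ^ i = (α ^ (q ^ r + 1)) ^ j := Units.ext (by simpa using h)
    have := pow_injOn_Iio_orderOf (x := α ^ (q ^ r + 1))
    rw [hβ] at this
    exact this hi hj hu
  refine ⟨fun j => by simp, ?_, ?_⟩
  · intro b hb hb2
    refine orbitCard (fun j => ((0 : F), ((α : F) ^ (q ^ r + 1)) ^ j * b)) (q - 1) hq1
      (fun j => by simp [hmodβ j]) (fun i hi j hj h => ?_)
    have h2 : ((α : F) ^ (q ^ r + 1)) ^ i * b = ((α : F) ^ (q ^ r + 1)) ^ j * b := by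
      simpa using h
    exact hinjβ i hi j hj (mul_right_cancel₀ hb h2)
  · intro x y hx _
    refine orbitCard (fun j => ((α : F) ^ j * x, ((α : F) ^ (q ^ r + 1)) ^ j * y))
      ((q ^ r + 1) * (q - 1)) hN (fun j => ?_) (fun i hi j hj h => ?_)
    · have hB : ((α : F) ^ (q ^ r + 1)) ^ (j % ((q ^ r + 1) * (q - 1)))
          = ((α : F) ^ (q ^ r + 1)) ^ j := by
        rw [pow_right_comm, hmodα j, pow_right_comm]
      simp [hmodα j, hB]
    · have h2 : (α : F) ^ i * x = (α : F) ^ j * x := by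
        have := congrArg Prod.fst h
        simpa using this
      exact hinjα i hi j hj (mul_right_cancel₀ hx h2)
end
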